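/- Let p be an odd prime and n ≥ 1. The inverse permutation f : 𝔽_{p^n} → 𝔽_{p^n}, f(x) = x^{p^n − 2}, is a GAPN function: for all a ∈ 𝔽_{p^n}ˣ and b ∈ 𝔽_{p^n}, #{x ∈ 𝔽_{p^n} : ∑_{i=0}^{p−1} f(x + i·a) = b} ≤ p. -/

import Mathlib

open scoped BigOperators
open Polynomial Finset

section Aux

variable {p : ℕ} [Fact p.Prime] {K : Type*} [Field K] [CharP K p]

private lemma aux_hp3 (hp : Odd p) : 3 ≤ p := by
  have hprime : p.Prime := Fact.out
  have h2 := hprime.two_le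
  rcases Nat.lt_or_ge p 3 with h | h
  · interval_cases p
    · exact absurd hp (by decide)
  · exact h

/-- Sum of all elements of `ZMod p` is zero for odd `p`. -/
private lemma aux_sum_zmod (hp : Odd p) : ∑ z : ZMod p, z = 0 := by
  have hprime : p.Prime := Fact.out
  have hne2 : p ≠ 2 := by rintro rfl; exact absurd hp (by decide)
  have h : ∑ z : ZMod p, z = ∑ z : ZMod p, -z :=
    Fintype.sum_bijective (fun z : ZMod p => -z) (neg_involutive.bijective) _ _
      (fun z => by simp)
  have h2 : (2 : ZMod p) * ∑ z : ZMod p, z = 0 := by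
    rw [two_mul]
    nth_rewrite 2 [h]
    rw [← Finset.sum_add_distrib]
    simp
  have h2ne : (2 : ZMod p) ≠ 0 := by
    intro hc
    have : ((2 : ℕ) : ZMod p) = 0 := by exact_mod_cast hc
    rw [ZMod.natCast_eq_zero_iff] at this
    exact hne2 ((Nat.prime_dvd_prime_iff_eq hprime Nat.prime_two).mp this)
  exact (mul_eq_zero.mp h2).resolve_left h2ne

/-- Sum of inverses of all elements of `ZMod p` is zero for odd `p`. -/
private lemma aux_sum_inv_zmod (hp : Odd p) : ∑ z : ZMod p, z⁻¹ = 0 := by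
  have h : ∑ z : ZMod p, z⁻¹ = ∑ z : ZMod p, z :=
    Fintype.sum_bijective (fun z : ZMod p => z⁻¹) (inv_involutive.bijective) _ _
      (fun z => rfl)
  rw [h]; exact aux_sum_zmod hp

private lemma aux_sum_range_zmod {M : Type*} [AddCommMonoid M] (f : ZMod p → M) :
    ∑ j ∈ Finset.range p, f ((j : ℕ) : ZMod p) = ∑ z : ZMod p, f z := by
  haveI : NeZero p := ⟨(Fact.out : p.Prime).ne_zero⟩
  refine Finset.sum_nbij' (fun j => ((j : ℕ) : ZMod p)) (fun z => z.val)
    (fun j _ => Finset.mem_univ _) (fun z _ => Finset.mem_range.mpr (ZMod.val_lt z))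
    (fun j hj => ZMod.val_cast_of_lt (Finset.mem_range.mp hj))
    (fun z _ => ZMod.natCast_rightInverse z) (fun j _ => rfl)

/-- The key vanishing sum: for any `c : K` in the prime field,
`∑_{j < p} ((j : K) - c)⁻¹ = 0`. -/
private lemma aux_sum_inv_shift (hp : Odd p) (i0 : ℕ) :
    ∑ j ∈ Finset.range p, (((j : ℕ) : K) - ((i0 : ℕ) : K))⁻¹ = 0 := by
  let ψ : ZMod p →+* K := ZMod.castHom (dvd_refl p) K
  have hcast : ∀ j : ℕ, ((j : ℕ) : K) = ψ ((j : ℕ) : ZMod p) := fun j => (map_natCast ψ j).symm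
  have h1 : ∀ j : ℕ, (((j : ℕ) : K) - ((i0 : ℕ) : K))⁻¹
      = ψ ((((j : ℕ) : ZMod p) - ((i0 : ℕ) : ZMod p))⁻¹) := by
    intro j
    rw [hcast j, hcast i0, ← map_sub, map_inv₀]
  calc ∑ j ∈ Finset.range p, (((j : ℕ) : K) - ((i0 : ℕ) : K))⁻¹
      = ∑ j ∈ Finset.range p, ψ ((((j : ℕ) : ZMod p) - ((i0 : ℕ) : ZMod p))⁻¹) := by
        exact Finset.sum_congr rfl fun j _ => h1 j
    _ = ∑ z : ZMod p, ψ ((z - ((i0 : ℕ) : ZMod p))⁻¹) :=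
        aux_sum_range_zmod (fun z => ψ ((z - ((i0 : ℕ) : ZMod p))⁻¹))
    _ = ∑ z : ZMod p, ψ (z⁻¹) :=
        Fintype.sum_bijective (fun z : ZMod p => z - ((i0 : ℕ) : ZMod p))
          ((Equiv.subRight ((i0 : ℕ) : ZMod p)).bijective) _ _ (fun z => rfl)
    _ = ψ (∑ z : ZMod p, z⁻¹) := (map_sum ψ _ _).symm
    _ = 0 := by rw [aux_sum_inv_zmod hp, map_zero]

/-- Frobenius fixes the prime field. -/
private lemma aux_natCast_pow_card (i : ℕ) : ((i : ℕ) : K) ^ p = ((i : ℕ) : K) := by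
  let ψ : ZMod p →+* K := ZMod.castHom (dvd_refl p) K
  have hcast : ((i : ℕ) : K) = ψ ((i : ℕ) : ZMod p) := (map_natCast ψ i).symm
  rw [hcast, ← map_pow, ZMod.pow_card]

/-- The product of all `X + C (i • a)` equals `X^p - C (a^(p-1)) * X`. -/
private lemma aux_claim1 (hp : Odd p) (a : K) (ha : a ≠ 0) :
    ∏ i ∈ Finset.range p, (X + C (((i : ℕ) : K) * a)) = X ^ p - C (a ^ (p - 1)) * X := by
  classical
  have hp3 : 3 ≤ p := aux_hp3 hp
  have hp0 : 0 < p := by omega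
  set Q : K[X] := ∏ i ∈ Finset.range p, (X + C (((i : ℕ) : K) * a)) with hQ
  set R : K[X] := X ^ p - C (a ^ (p - 1)) * X with hR
  have hQm : Q.Monic := monic_prod_of_monic _ _ fun i _ => monic_X_add_C _
  have hQd : Q.natDegree = p := by
    rw [hQ, natDegree_prod _ _ (fun i _ => (monic_X_add_C _).ne_zero)]
    simp only [natDegree_X_add_C, Finset.sum_const, smul_eq_mul, mul_one, Finset.card_range]
  have hdegCX : (-(C (a ^ (p - 1)) * X)).degree < (X ^ p : K[X]).degree := by
    rw [degree_neg, degree_X_pow]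
    calc (C (a ^ (p - 1)) * X).degree ≤ (C (a ^ (p - 1))).degree + (X : K[X]).degree :=
          degree_mul_le _ _
      _ ≤ 0 + 1 := add_le_add degree_C_le degree_X_le
      _ < (p : WithBot ℕ) := by
          rw [zero_add]
          exact_mod_cast (by omega : 1 < p)
  have hRm : R.Monic := by
    have := (monic_X_pow (R := K) p).add_of_left hdegCX
    simpa [hR, sub_eq_add_neg] using this
  have hRdeg : R.degree = (p : WithBot ℕ) := by
    rw [hR, sub_eq_add_neg, degree_add_eq_left_of_degree_lt hdegCX, degree_X_pow]
  have hQdeg : Q.degree = (p : WithBot ℕ) := by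
    rw [degree_eq_natDegree hQm.ne_zero, hQd]
  -- the difference
  set D : K[X] := R - Q with hD
  by_cases hD0 : D = 0
  · rw [hD, sub_eq_zero] at hD0
    exact hD0.symm
  · exfalso
    have hdegD : D.degree < (p : WithBot ℕ) := by
      rw [← hRdeg]
      exact degree_sub_lt (hRdeg.trans hQdeg.symm) hRm.ne_zero (by rw [hRm.leadingCoeff, hQm.leadingCoeff])
    have hndegD : D.natDegree < p := by
      rwa [← natDegree_lt_iff_degree_lt hD0] at hdegD
    -- D vanishes at the p distinct points -(i•a)
    have heval : ∀ i ∈ Finset.range p, D.eval (-(((i : ℕ) : K) * a)) = 0 := by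
      intro i hi
      have hQe : Q.eval (-(((i : ℕ) : K) * a)) = 0 := by
        rw [hQ, eval_prod]
        refine Finset.prod_eq_zero hi ?_
        simp
      have hRe : R.eval (-(((i : ℕ) : K) * a)) = 0 := by
        rw [hR]
        simp only [eval_sub, eval_pow, eval_mul, eval_C, eval_X]
        rw [Odd.neg_pow hp, mul_pow, aux_natCast_pow_card]
        have hpa : a ^ p = a ^ (p - 1) * a := by
          rw [← pow_succ]
          congr 1
          omega
        rw [hpa]
        ring
      simp [hD, eval_sub, hQe, hRe]
    have hinj : Set.InjOn (fun i : ℕ => -(((i : ℕ) : K) * a)) (Finset.range p : Set ℕ) := by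
      intro i hi j hj hij
      simp only [Finset.coe_range, Set.mem_Iio] at hi hj
      have : ((i : ℕ) : K) = ((j : ℕ) : K) := by
        exact mul_right_cancel₀ ha (neg_injective hij)
      exact CharP.natCast_injOn_Iio K p hi hj this
    set T : Finset K := (Finset.range p).image (fun i : ℕ => -(((i : ℕ) : K) * a)) with hT
    have hTcard : T.card = p := by
      rw [hT, Finset.card_image_of_injOn hinj, Finset.card_range]
    have hsub : T ⊆ D.roots.toFinset := by
      intro x hx
      rw [hT, Finset.mem_image] at hx
      obtain ⟨i, hi, rfl⟩ := hx
      rw [Multiset.mem_toFinset, mem_roots hD0]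
      exact heval i hi
    have := Finset.card_le_card hsub
    have h2 := Multiset.toFinset_card_le D.roots
    have h3 := Polynomial.card_roots' D
    omega
  
/-- Finset version of `derivative_prod`. -/
private lemma aux_derivative_finset_prod {ι : Type*} [DecidableEq ι] (s : Finset ι)
    (f : ι → K[X]) :
    derivative (∏ i ∈ s, f i) = ∑ i ∈ s, (∏ j ∈ s.erase i, f j) * derivative (f i) := by
  rw [Finset.prod_eq_multiset_prod, Polynomial.derivative_prod]
  rfl

/-- The key identity: the sum of products over erased index is the constant `-a^(p-1)`. -/
private lemma aux_sum_prod_erase (hp : Odd p) (a : K) (ha : a ≠ 0) (x : K) :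
    ∑ i ∈ Finset.range p, ∏ j ∈ (Finset.range p).erase i, (x + ((j : ℕ) : K) * a)
      = -a ^ (p - 1) := by
  have hder : derivative (∏ i ∈ Finset.range p, (X + C (((i : ℕ) : K) * a)))
      = - C (a ^ (p - 1)) := by
    rw [aux_claim1 hp a ha]
    rw [derivative_sub, derivative_X_pow, derivative_mul, derivative_C, derivative_X]
    rw [show ((p : ℕ) : K) = 0 from CharP.cast_eq_zero K p, map_zero]
    ring
  have hder2 := aux_derivative_finset_prod (Finset.range p)
    (fun i => (X : K[X]) + C (((i : ℕ) : K) * a))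
  rw [hder] at hder2
  have := congrArg (Polynomial.eval x) hder2.symm
  simpa [eval_finset_sum, eval_prod] using this

end Aux

theorem stmt_13 (p n : ℕ) [Fact p.Prime] (hp : Odd p) (hn : 0 < n) :
    ∀ a : GaloisField p n, a ≠ 0 → ∀ b : GaloisField p n,
      {x : GaloisField p n |
        ∑ i ∈ Finset.range p, (x + i • a) ^ (p ^ n - 2) = b}.ncard ≤ p := by
  classical
  set K := GaloisField p n with hK
  intro a ha b
  haveI : Fintype K := Fintype.ofFinite K
  have hp3 : 3 ≤ p := aux_hp3 hp
  have hcard : Fintype.card K = p ^ n := by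
    rw [← Nat.card_eq_fintype_card]
    exact GaloisField.card p n hn.ne'
  have hq3 : 3 ≤ p ^ n := le_trans hp3 (Nat.le_self_pow hn.ne' p)
  -- x ^ (p^n - 2) = x⁻¹
  have hinv : ∀ z : K, z ^ (p ^ n - 2) = z⁻¹ := by
    intro z
    rcases eq_or_ne z 0 with rfl | hz
    · rw [zero_pow (by omega), inv_zero]
    · have h1 : z ^ (p ^ n - 1) = 1 := by
        rw [← hcard]
        exact FiniteField.pow_card_sub_one_eq_one z hz
      refine eq_inv_of_mul_eq_one_left ?_
      rw [← pow_succ]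
      rw [show p ^ n - 2 + 1 = p ^ n - 1 by omega]
      exact h1
  -- rewrite the set
  have hset : {x : K | ∑ i ∈ Finset.range p, (x + i • a) ^ (p ^ n - 2) = b}
      = {x : K | ∑ i ∈ Finset.range p, (x + ((i : ℕ) : K) * a)⁻¹ = b} := by
    ext x
    simp only [Set.mem_setOf_eq]
    constructor <;> intro h <;> [skip; skip] <;>
    · rw [← h]
      exact Finset.sum_congr rfl fun i _ => by rw [hinv, nsmul_eq_mul]
  rw [hset]
  set g : K → K := fun x => ∑ i ∈ Finset.range p, (x + ((i : ℕ) : K) * a)⁻¹ with hg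
  -- at the special points, g vanishes
  have hgzero : ∀ i ∈ Finset.range p, g (-(((i : ℕ) : K) * a)) = 0 := by
    intro i _
    simp only [hg]
    have : ∀ j ∈ Finset.range p,
        (-(((i : ℕ) : K) * a) + ((j : ℕ) : K) * a)⁻¹
          = (((j : ℕ) : K) - ((i : ℕ) : K))⁻¹ * a⁻¹ := by
      intro j _
      rw [← mul_inv]
      congr 1
      ring
    rw [Finset.sum_congr rfl this, ← Finset.sum_mul, aux_sum_inv_shift hp i, zero_mul]
  -- multiplying through by the full product
  have hgval : ∀ x : K, (∀ i ∈ Finset.range p, x + ((i : ℕ) : K) * a ≠ 0) →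
      g x * ∏ i ∈ Finset.range p, (x + ((i : ℕ) : K) * a) = -a ^ (p - 1) := by
    intro x hx
    rw [hg]
    rw [Finset.sum_mul]
    rw [← aux_sum_prod_erase hp a ha x]
    refine Finset.sum_congr rfl fun i hi => ?_
    rw [← Finset.mul_prod_erase _ _ hi, inv_mul_cancel_left₀ (hx i hi)]
  rcases eq_or_ne b 0 with rfl | hb
  · -- b = 0 : solutions are exactly the special points
    set T : Finset K := (Finset.range p).image (fun i : ℕ => -(((i : ℕ) : K) * a)) with hT
    have hsub : {x : K | g x = 0} ⊆ (T : Set K) := by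
      intro x hx
      simp only [Set.mem_setOf_eq] at hx
      by_contra hxT
      have hne : ∀ i ∈ Finset.range p, x + ((i : ℕ) : K) * a ≠ 0 := by
        intro i hi hc
        apply hxT
        have : x = -(((i : ℕ) : K) * a) := by linear_combination hc
        rw [this]
        exact Finset.mem_coe.mpr (Finset.mem_image_of_mem _ hi)
      have := hgval x hne
      rw [hx, zero_mul] at this
      have : a ^ (p - 1) = 0 := by linear_combination this
      exact pow_ne_zero _ ha this
    calc {x : K | g x = 0}.ncard ≤ (T : Set K).ncard :=
          Set.ncard_le_ncard hsub (T.finite_toSet)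
      _ = T.card := Set.ncard_coe_finset T
      _ ≤ p := le_trans (Finset.card_image_le) (le_of_eq (Finset.card_range p))
  · -- b ≠ 0 : solutions are roots of a degree-p polynomial
    set F : K[X] := C b * (X ^ p - C (a ^ (p - 1)) * X) + C (a ^ (p - 1)) with hF
    have hF0 : F ≠ 0 := by
      intro hc
      have : F.coeff p = 0 := by rw [hc]; simp
      rw [hF] at this
      simp only [coeff_add, coeff_C_mul, coeff_sub, coeff_X_pow, if_pos rfl,
        coeff_C, if_neg (by omega : ¬ p = 0)] at this
      rw [Polynomial.coeff_X, if_neg (by omega : ¬ 1 = p)] at this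
      simp at this
      exact hb this
    have hFdeg : F.natDegree ≤ p := by
      rw [hF]
      refine le_trans (natDegree_add_le _ _) ?_
      simp only [natDegree_C, max_le_iff]
      constructor
      · refine le_trans (natDegree_mul_le) ?_
        simp only [natDegree_C, zero_add]
        refine le_trans (natDegree_sub_le _ _) ?_
        simp only [natDegree_X_pow, max_le_iff]
        refine ⟨le_refl p, ?_⟩
        refine le_trans (natDegree_mul_le) ?_
        simp [natDegree_X]
        omega
      · omega
    have hsub : {x : K | g x = b} ⊆ (F.roots.toFinset : Set K) := by
      intro x hx
      simp only [Set.mem_setOf_eq] at hx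
      have hne : ∀ i ∈ Finset.range p, x + ((i : ℕ) : K) * a ≠ 0 := by
        intro i hi hc
        have : x = -(((i : ℕ) : K) * a) := by linear_combination hc
        rw [this] at hx
        rw [hgzero i hi] at hx
        exact hb hx.symm
      have hmain := hgval x hne
      rw [hx] at hmain
      have hprodeval : ∏ i ∈ Finset.range p, (x + ((i : ℕ) : K) * a)
          = x ^ p - a ^ (p - 1) * x := by
        have := congrArg (Polynomial.eval x) (aux_claim1 hp a ha)
        simpa [eval_prod] using this
      rw [hprodeval] at hmain
      have hev : F.eval x = 0 := by
        rw [hF]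
        simp only [eval_add, eval_mul, eval_C, eval_sub, eval_pow, eval_X]
        linear_combination hmain
      simp only [Finset.mem_coe, Multiset.mem_toFinset]
      rw [mem_roots hF0]
      exact hev
    calc {x : K | g x = b}.ncard ≤ (F.roots.toFinset : Set K).ncard :=
          Set.ncard_le_ncard hsub (F.roots.toFinset.finite_toSet)
      _ = F.roots.toFinset.card := Set.ncard_coe_finset _
      _ ≤ Multiset.card F.roots := Multiset.toFinset_card_le _
      _ ≤ F.natDegree := Polynomial.card_roots' F
      _ ≤ p := hFdeg
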